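/- With r_x^k defined by r_x^0 = p and r_x^k = r_x(r_x^{k−1}) (the case w ≡ 1), for all k = 1, …, n one has ∫_a^b r_x^k(t) dt = (1/k!) ∫_a^b p(t)(t−x)^k dt. -/

import Mathlib

open MeasureTheory intervalIntegral

/-- The kernels `r_x^k` (case `w ≡ 1`): `r_x^0 = p` and
`r_x^{k+1}(s) = −∫_a^s r_x^k` for `s ≤ x`, `∫_s^b r_x^k` for `s ≥ x`. -/
noncomputable def rk (a b x : ℝ) (p : ℝ → ℝ) : ℕ → ℝ → ℝ
  | 0 => p
  | k + 1 => fun s =>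
      if s ≤ x then -(∫ t in a..s, rk a b x p k t)
      else ∫ t in s..b, rk a b x p k t

/-- Fubini on the lower triangle `a ≤ t ≤ u ≤ c`. -/
lemma fub1 (q : ℝ → ℝ) (a c : ℝ) (hac : a ≤ c)
    (hq : IntervalIntegrable q volume a c) (k : ℕ) :
    (∫ u in a..c, ∫ t in a..u, q t * (t - u) ^ k) =
      ∫ t in a..c, q t * (-(t - c) ^ (k + 1) / (k + 1)) := by
  have hqS : IntegrableOn q (Set.Ioc a c) volume :=
    (intervalIntegrable_iff_integrableOn_Ioc_of_le hac).1 hq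
  set F : ℝ → ℝ → ℝ := fun u t => if t ≤ u then q t * (t - u) ^ k else 0 with hF
  have hInt : Integrable (Function.uncurry F)
      ((volume.restrict (Set.Ioc a c)).prod (volume.restrict (Set.Ioc a c))) := by
    have hmeas : AEStronglyMeasurable (Function.uncurry F)
        ((volume.restrict (Set.Ioc a c)).prod (volume.restrict (Set.Ioc a c))) := by
      have h1 : AEStronglyMeasurable (fun z : ℝ × ℝ => q z.2 * (z.2 - z.1) ^ k)
          ((volume.restrict (Set.Ioc a c)).prod (volume.restrict (Set.Ioc a c))) :=
        (hqS.aestronglyMeasurable.comp_snd).mul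
          ((continuous_snd.sub continuous_fst).pow k).aestronglyMeasurable
      have heq : Function.uncurry F = Set.indicator {z : ℝ × ℝ | z.2 ≤ z.1}
          (fun z => q z.2 * (z.2 - z.1) ^ k) := by
        ext z
        simp only [Function.uncurry, hF, Set.indicator_apply, Set.mem_setOf_eq]
      rw [heq]
      exact h1.indicator (measurableSet_le measurable_snd measurable_fst)
    have hG : Integrable (fun z : ℝ × ℝ => |q z.2| * (c - a) ^ k)
        ((volume.restrict (Set.Ioc a c)).prod (volume.restrict (Set.Ioc a c))) := by
      have h1 : Integrable (fun _ : ℝ => (1 : ℝ)) (volume.restrict (Set.Ioc a c)) := by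
        refine integrableOn_const ?_
        simp [Real.volume_Ioc]
      have h2 : Integrable (fun t : ℝ => |q t| * (c - a) ^ k)
          (volume.restrict (Set.Ioc a c)) := hqS.abs.mul_const _
      simpa using h1.smul_prod h2
    refine hG.mono' hmeas ?_
    rw [Measure.prod_restrict]
    filter_upwards [ae_restrict_mem (measurableSet_Ioc.prod measurableSet_Ioc)] with z hz
    obtain ⟨hz1, hz2⟩ := hz
    by_cases h : z.2 ≤ z.1
    · simp only [Function.uncurry, hF, if_pos h, Real.norm_eq_abs, abs_mul, abs_pow]
      have hle : |z.2 - z.1| ≤ c - a := by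
        rw [abs_sub_le_iff]
        refine ⟨?_, ?_⟩ <;>
          · have := hz1.1; have := hz1.2; have := hz2.1; have := hz2.2; linarith
      exact mul_le_mul_of_nonneg_left (pow_le_pow_left₀ (abs_nonneg _) hle k) (abs_nonneg _)
    · simp only [Function.uncurry, hF, if_neg h, norm_zero]
      exact mul_nonneg (abs_nonneg _) (pow_nonneg (by linarith) k)
  have hL : (∫ u in a..c, ∫ t in a..u, q t * (t - u) ^ k)
      = ∫ u in Set.Ioc a c, ∫ t in Set.Ioc a c, F u t := by
    rw [intervalIntegral.integral_of_le hac]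
    refine setIntegral_congr_fun measurableSet_Ioc fun u hu => ?_
    calc (∫ t in a..u, q t * (t - u) ^ k)
        = ∫ t in Set.Ioc a c ∩ Set.Iic u, q t * (t - u) ^ k := by
          rw [Set.Ioc_inter_Iic, min_eq_right hu.2, intervalIntegral.integral_of_le hu.1.le]
      _ = ∫ t in Set.Ioc a c, Set.indicator (Set.Iic u) (fun t => q t * (t - u) ^ k) t :=
          (setIntegral_indicator measurableSet_Iic).symm
      _ = ∫ t in Set.Ioc a c, F u t := by
          refine setIntegral_congr_fun measurableSet_Ioc fun t _ => ?_
          simp [hF, Set.indicator_apply]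
  have hswap := MeasureTheory.integral_integral_swap hInt
  have hR : (∫ t in Set.Ioc a c, ∫ u in Set.Ioc a c, F u t)
      = ∫ t in a..c, q t * (-(t - c) ^ (k + 1) / (k + 1)) := by
    rw [intervalIntegral.integral_of_le hac]
    refine setIntegral_congr_fun measurableSet_Ioc fun t ht => ?_
    have h2 : Set.Ioc a c ∩ Set.Ici t = Set.Icc t c := by
      ext u
      simp only [Set.mem_inter_iff, Set.mem_Ioc, Set.mem_Ici, Set.mem_Icc]
      constructor
      · rintro ⟨⟨_, hu2⟩, hu3⟩; exact ⟨hu3, hu2⟩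
      · rintro ⟨hu1, hu2⟩; exact ⟨⟨lt_of_lt_of_le ht.1 hu1, hu2⟩, hu1⟩
    have h3 : (∫ u in t..c, (t - u) ^ k) = -(t - c) ^ (k + 1) / (k + 1) := by
      rw [intervalIntegral.integral_comp_sub_left (fun y => y ^ k) t, sub_self,
        integral_pow]
      simp [neg_div]
    calc (∫ u in Set.Ioc a c, F u t)
        = ∫ u in Set.Ioc a c, Set.indicator (Set.Ici t) (fun u => q t * (t - u) ^ k) u := by
          refine setIntegral_congr_fun measurableSet_Ioc fun u _ => ?_
          simp [hF, Set.indicator_apply]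
      _ = ∫ u in Set.Ioc a c ∩ Set.Ici t, q t * (t - u) ^ k :=
          setIntegral_indicator measurableSet_Ici
      _ = ∫ u in t..c, q t * (t - u) ^ k := by
          rw [h2, integral_Icc_eq_integral_Ioc, ← intervalIntegral.integral_of_le ht.2]
      _ = q t * (-(t - c) ^ (k + 1) / (k + 1)) := by
          rw [intervalIntegral.integral_const_mul, h3]
  rw [hL, hswap, hR]

/-- Fubini on the upper triangle `c ≤ u ≤ t ≤ b`. -/
lemma fub2 (q : ℝ → ℝ) (c b : ℝ) (hcb : c ≤ b)
    (hq : IntervalIntegrable q volume c b) (k : ℕ) :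
    (∫ u in c..b, ∫ t in u..b, q t * (t - u) ^ k) =
      ∫ t in c..b, q t * ((t - c) ^ (k + 1) / (k + 1)) := by
  have hqS : IntegrableOn q (Set.Ioc c b) volume :=
    (intervalIntegrable_iff_integrableOn_Ioc_of_le hcb).1 hq
  set F : ℝ → ℝ → ℝ := fun u t => if u ≤ t then q t * (t - u) ^ k else 0 with hF
  have hInt : Integrable (Function.uncurry F)
      ((volume.restrict (Set.Ioc c b)).prod (volume.restrict (Set.Ioc c b))) := by
    have hmeas : AEStronglyMeasurable (Function.uncurry F)
        ((volume.restrict (Set.Ioc c b)).prod (volume.restrict (Set.Ioc c b))) := by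
      have h1 : AEStronglyMeasurable (fun z : ℝ × ℝ => q z.2 * (z.2 - z.1) ^ k)
          ((volume.restrict (Set.Ioc c b)).prod (volume.restrict (Set.Ioc c b))) :=
        (hqS.aestronglyMeasurable.comp_snd).mul
          ((continuous_snd.sub continuous_fst).pow k).aestronglyMeasurable
      have heq : Function.uncurry F = Set.indicator {z : ℝ × ℝ | z.1 ≤ z.2}
          (fun z => q z.2 * (z.2 - z.1) ^ k) := by
        ext z
        simp only [Function.uncurry, hF, Set.indicator_apply, Set.mem_setOf_eq]
      rw [heq]
      exact h1.indicator (measurableSet_le measurable_fst measurable_snd)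
    have hG : Integrable (fun z : ℝ × ℝ => |q z.2| * (b - c) ^ k)
        ((volume.restrict (Set.Ioc c b)).prod (volume.restrict (Set.Ioc c b))) := by
      have h1 : Integrable (fun _ : ℝ => (1 : ℝ)) (volume.restrict (Set.Ioc c b)) := by
        refine integrableOn_const ?_
        simp [Real.volume_Ioc]
      have h2 : Integrable (fun t : ℝ => |q t| * (b - c) ^ k)
          (volume.restrict (Set.Ioc c b)) := hqS.abs.mul_const _
      simpa using h1.smul_prod h2
    refine hG.mono' hmeas ?_
    rw [Measure.prod_restrict]
    filter_upwards [ae_restrict_mem (measurableSet_Ioc.prod measurableSet_Ioc)] with z hz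
    obtain ⟨hz1, hz2⟩ := hz
    by_cases h : z.1 ≤ z.2
    · simp only [Function.uncurry, hF, if_pos h, Real.norm_eq_abs, abs_mul, abs_pow]
      have hle : |z.2 - z.1| ≤ b - c := by
        rw [abs_sub_le_iff]
        refine ⟨?_, ?_⟩ <;>
          · have := hz1.1; have := hz1.2; have := hz2.1; have := hz2.2; linarith
      exact mul_le_mul_of_nonneg_left (pow_le_pow_left₀ (abs_nonneg _) hle k) (abs_nonneg _)
    · simp only [Function.uncurry, hF, if_neg h, norm_zero]
      exact mul_nonneg (abs_nonneg _) (pow_nonneg (by linarith) k)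
  have hL : (∫ u in c..b, ∫ t in u..b, q t * (t - u) ^ k)
      = ∫ u in Set.Ioc c b, ∫ t in Set.Ioc c b, F u t := by
    rw [intervalIntegral.integral_of_le hcb]
    refine setIntegral_congr_fun measurableSet_Ioc fun u hu => ?_
    have h2 : Set.Ioc c b ∩ Set.Ici u = Set.Icc u b := by
      ext t
      simp only [Set.mem_inter_iff, Set.mem_Ioc, Set.mem_Ici, Set.mem_Icc]
      constructor
      · rintro ⟨⟨_, ht2⟩, ht3⟩; exact ⟨ht3, ht2⟩
      · rintro ⟨ht1, ht2⟩; exact ⟨⟨lt_of_lt_of_le hu.1 ht1, ht2⟩, ht1⟩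
    calc (∫ t in u..b, q t * (t - u) ^ k)
        = ∫ t in Set.Ioc c b ∩ Set.Ici u, q t * (t - u) ^ k := by
          rw [h2, integral_Icc_eq_integral_Ioc, ← intervalIntegral.integral_of_le hu.2]
      _ = ∫ t in Set.Ioc c b, Set.indicator (Set.Ici u) (fun t => q t * (t - u) ^ k) t :=
          (setIntegral_indicator measurableSet_Ici).symm
      _ = ∫ t in Set.Ioc c b, F u t := by
          refine setIntegral_congr_fun measurableSet_Ioc fun t _ => ?_
          simp [hF, Set.indicator_apply]
  have hswap := MeasureTheory.integral_integral_swap hInt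
  have hR : (∫ t in Set.Ioc c b, ∫ u in Set.Ioc c b, F u t)
      = ∫ t in c..b, q t * ((t - c) ^ (k + 1) / (k + 1)) := by
    rw [intervalIntegral.integral_of_le hcb]
    refine setIntegral_congr_fun measurableSet_Ioc fun t ht => ?_
    have h3 : (∫ u in c..t, (t - u) ^ k) = (t - c) ^ (k + 1) / (k + 1) := by
      rw [intervalIntegral.integral_comp_sub_left (fun y => y ^ k) t, sub_self,
        integral_pow]
      simp
    calc (∫ u in Set.Ioc c b, F u t)
        = ∫ u in Set.Ioc c b, Set.indicator (Set.Iic t) (fun u => q t * (t - u) ^ k) u := by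
          refine setIntegral_congr_fun measurableSet_Ioc fun u _ => ?_
          simp [hF, Set.indicator_apply]
      _ = ∫ u in Set.Ioc c b ∩ Set.Iic t, q t * (t - u) ^ k :=
          setIntegral_indicator measurableSet_Iic
      _ = ∫ u in c..t, q t * (t - u) ^ k := by
          rw [Set.Ioc_inter_Iic, min_eq_right ht.2,
            ← intervalIntegral.integral_of_le ht.1.le]
      _ = q t * ((t - c) ^ (k + 1) / (k + 1)) := by
          rw [intervalIntegral.integral_const_mul, h3]
  rw [hL, hswap, hR]

/-- For all `k ≥ 1`, `∫_a^b r_x^k(t) dt = (1/k!) ∫_a^b p(t)(t−x)^k dt`. -/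
theorem stmt6 (a b : ℝ) (hab : a < b)
    (p : ℝ → ℝ) (hp : IntervalIntegrable p volume a b)
    (x : ℝ) (hx : x ∈ Set.Icc a b) :
    ∀ k : ℕ, 1 ≤ k →
      (∫ t in a..b, rk a b x p k t)
        = (1 / (Nat.factorial k : ℝ)) * ∫ t in a..b, p t * (t - x) ^ k := by
  obtain ⟨hax, hxb⟩ := hx
  -- closed form on the left of x
  have left_form : ∀ k : ℕ, ∀ s : ℝ, a ≤ s → s ≤ x →
      rk a b x p (k + 1) s
        = -(1 / (Nat.factorial k : ℝ)) * ∫ t in a..s, p t * (t - s) ^ k := by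
    intro k
    induction k with
    | zero =>
      intro s has hsx
      simp only [rk, if_pos hsx]
      simp
    | succ k ih =>
      intro s has hsx
      have hps : IntervalIntegrable p volume a s := by
        apply hp.mono_set
        rw [Set.uIcc_of_le has, Set.uIcc_of_le hab.le]
        exact Set.Icc_subset_Icc le_rfl (hsx.trans hxb)
      have hcongr : (∫ u in a..s, rk a b x p (k + 1) u)
          = ∫ u in a..s, -(1 / (Nat.factorial k : ℝ)) * ∫ t in a..u, p t * (t - u) ^ k := by
        refine intervalIntegral.integral_congr fun u hu => ?_
        rw [Set.uIcc_of_le has] at hu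
        exact ih u hu.1 (hu.2.trans hsx)
      show (if s ≤ x then -(∫ u in a..s, rk a b x p (k + 1) u)
          else ∫ u in s..b, rk a b x p (k + 1) u) = _
      rw [if_pos hsx, hcongr, intervalIntegral.integral_const_mul,
        fub1 p a s has hps k]
      have hpt : (∫ t in a..s, p t * (-(t - s) ^ (k + 1) / ((k : ℝ) + 1)))
          = (-(1 / ((k : ℝ) + 1))) * ∫ t in a..s, p t * (t - s) ^ (k + 1) := by
        rw [← intervalIntegral.integral_const_mul]
        refine intervalIntegral.integral_congr fun t _ => ?_
        ring
      rw [hpt]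
      have hfac : ((k + 1).factorial : ℝ) = ((k : ℝ) + 1) * (k.factorial : ℝ) := by
        rw [Nat.factorial_succ]; push_cast; ring
      have h1 : (k.factorial : ℝ) ≠ 0 := Nat.cast_ne_zero.2 k.factorial_ne_zero
      have h2 : ((k : ℝ) + 1) ≠ 0 := by positivity
      rw [hfac]
      field_simp
  -- closed form strictly to the right of x
  have right_form : ∀ k : ℕ, ∀ s : ℝ, x < s → s ≤ b →
      rk a b x p (k + 1) s
        = (1 / (Nat.factorial k : ℝ)) * ∫ t in s..b, p t * (t - s) ^ k := by
    intro k
    induction k with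
    | zero =>
      intro s hxs hsb
      simp only [rk, if_neg (not_le.2 hxs)]
      simp
    | succ k ih =>
      intro s hxs hsb
      have hps : IntervalIntegrable p volume s b := by
        apply hp.mono_set
        rw [Set.uIcc_of_le hsb, Set.uIcc_of_le hab.le]
        exact Set.Icc_subset_Icc (hax.trans (le_of_lt hxs)) le_rfl
      have hcongr : (∫ u in s..b, rk a b x p (k + 1) u)
          = ∫ u in s..b, (1 / (Nat.factorial k : ℝ)) * ∫ t in u..b, p t * (t - u) ^ k := by
        refine intervalIntegral.integral_congr fun u hu => ?_
        rw [Set.uIcc_of_le hsb] at hu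
        exact ih u (lt_of_lt_of_le hxs hu.1) hu.2
      show (if s ≤ x then -(∫ u in a..s, rk a b x p (k + 1) u)
          else ∫ u in s..b, rk a b x p (k + 1) u) = _
      rw [if_neg (not_le.2 hxs), hcongr, intervalIntegral.integral_const_mul,
        fub2 p s b hsb hps k]
      have hpt : (∫ t in s..b, p t * ((t - s) ^ (k + 1) / ((k : ℝ) + 1)))
          = (1 / ((k : ℝ) + 1)) * ∫ t in s..b, p t * (t - s) ^ (k + 1) := by
        rw [← intervalIntegral.integral_const_mul]
        refine intervalIntegral.integral_congr fun t _ => ?_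
        ring
      rw [hpt]
      have hfac : ((k + 1).factorial : ℝ) = ((k : ℝ) + 1) * (k.factorial : ℝ) := by
        rw [Nat.factorial_succ]; push_cast; ring
      have h1 : (k.factorial : ℝ) ≠ 0 := Nat.cast_ne_zero.2 k.factorial_ne_zero
      have h2 : ((k : ℝ) + 1) ≠ 0 := by positivity
      rw [hfac]
      field_simp
  -- integrability of rk on the two halves
  have hrint : ∀ k : ℕ, IntervalIntegrable (rk a b x p k) volume a x ∧
      IntervalIntegrable (rk a b x p k) volume x b := by
    intro k
    induction k with
    | zero =>
      refine ⟨hp.mono_set ?_, hp.mono_set ?_⟩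
      · rw [Set.uIcc_of_le hax, Set.uIcc_of_le hab.le]
        exact Set.Icc_subset_Icc le_rfl hxb
      · rw [Set.uIcc_of_le hxb, Set.uIcc_of_le hab.le]
        exact Set.Icc_subset_Icc hax le_rfl
    | succ k ih =>
      obtain ⟨ih1, ih2⟩ := ih
      constructor
      · have hcont : ContinuousOn (fun s => -(∫ t in a..s, rk a b x p k t))
            (Set.uIcc a x) :=
          (continuousOn_primitive_interval' ih1 Set.left_mem_uIcc).neg
        have hii : IntervalIntegrable (fun s => -(∫ t in a..s, rk a b x p k t))
            volume a x := hcont.intervalIntegrable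
        rw [intervalIntegrable_iff_integrableOn_Ioc_of_le hax] at hii ⊢
        refine hii.congr_fun (fun s hs => ?_) measurableSet_Ioc
        simp only [rk, if_pos hs.2]
      · have hcont : ContinuousOn (fun s => ∫ t in s..b, rk a b x p k t)
            (Set.uIcc x b) := by
          have hio : IntegrableOn (rk a b x p k) (Set.uIcc x b) volume := by
            rw [Set.uIcc_of_le hxb, integrableOn_Icc_iff_integrableOn_Ioc]
            exact (intervalIntegrable_iff_integrableOn_Ioc_of_le hxb).1 ih2
          exact continuousOn_primitive_interval_left hio
        have hii : IntervalIntegrable (fun s => ∫ t in s..b, rk a b x p k t)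
            volume x b := hcont.intervalIntegrable
        rw [intervalIntegrable_iff_integrableOn_Ioc_of_le hxb] at hii ⊢
        refine hii.congr_fun (fun s hs => ?_) measurableSet_Ioc
        simp only [rk, if_neg (not_le.2 hs.1)]
  -- main computation
  rintro k hk
  obtain ⟨m, rfl⟩ : ∃ m, k = m + 1 := ⟨k - 1, (Nat.succ_pred_eq_of_pos hk).symm⟩
  have hsplit : (∫ t in a..b, rk a b x p (m + 1) t)
      = (∫ t in a..x, rk a b x p (m + 1) t) + ∫ t in x..b, rk a b x p (m + 1) t :=
    (intervalIntegral.integral_add_adjacent_intervals (hrint (m + 1)).1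
      (hrint (m + 1)).2).symm
  have hpx : IntervalIntegrable p volume a x := by
    apply hp.mono_set
    rw [Set.uIcc_of_le hax, Set.uIcc_of_le hab.le]
    exact Set.Icc_subset_Icc le_rfl hxb
  have hpxb : IntervalIntegrable p volume x b := by
    apply hp.mono_set
    rw [Set.uIcc_of_le hxb, Set.uIcc_of_le hab.le]
    exact Set.Icc_subset_Icc hax le_rfl
  have hfac : ((m + 1).factorial : ℝ) = ((m : ℝ) + 1) * (m.factorial : ℝ) := by
    rw [Nat.factorial_succ]; push_cast; ring
  have h1 : (m.factorial : ℝ) ≠ 0 := Nat.cast_ne_zero.2 m.factorial_ne_zero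
  have h2 : ((m : ℝ) + 1) ≠ 0 := by positivity
  -- left half
  have hleft : (∫ t in a..x, rk a b x p (m + 1) t)
      = (1 / ((m + 1).factorial : ℝ)) * ∫ t in a..x, p t * (t - x) ^ (m + 1) := by
    have hc : (∫ s in a..x, rk a b x p (m + 1) s)
        = ∫ s in a..x, -(1 / (Nat.factorial m : ℝ)) * ∫ t in a..s, p t * (t - s) ^ m := by
      refine intervalIntegral.integral_congr fun s hs => ?_
      rw [Set.uIcc_of_le hax] at hs
      exact left_form m s hs.1 hs.2
    have hpt : (∫ t in a..x, p t * (-(t - x) ^ (m + 1) / ((m : ℝ) + 1)))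
        = (-(1 / ((m : ℝ) + 1))) * ∫ t in a..x, p t * (t - x) ^ (m + 1) := by
      rw [← intervalIntegral.integral_const_mul]
      refine intervalIntegral.integral_congr fun t _ => ?_
      ring
    rw [hc, intervalIntegral.integral_const_mul, fub1 p a x hax hpx m, hpt, hfac]
    field_simp
  -- right half
  have hright : (∫ t in x..b, rk a b x p (m + 1) t)
      = (1 / ((m + 1).factorial : ℝ)) * ∫ t in x..b, p t * (t - x) ^ (m + 1) := by
    have hc : (∫ s in x..b, rk a b x p (m + 1) s)
        = ∫ s in x..b, (1 / (Nat.factorial m : ℝ)) * ∫ t in s..b, p t * (t - s) ^ m := by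
      rw [intervalIntegral.integral_of_le hxb, intervalIntegral.integral_of_le hxb]
      refine setIntegral_congr_fun measurableSet_Ioc fun s hs => ?_
      exact right_form m s hs.1 hs.2
    have hpt : (∫ t in x..b, p t * ((t - x) ^ (m + 1) / ((m : ℝ) + 1)))
        = (1 / ((m : ℝ) + 1)) * ∫ t in x..b, p t * (t - x) ^ (m + 1) := by
      rw [← intervalIntegral.integral_const_mul]
      refine intervalIntegral.integral_congr fun t _ => ?_
      ring
    rw [hc, intervalIntegral.integral_const_mul, fub2 p x b hxb hpxb m, hpt, hfac]
    field_simp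
  have hint1 : IntervalIntegrable (fun t => p t * (t - x) ^ (m + 1)) volume a x :=
    hpx.mul_continuousOn (Continuous.continuousOn (by continuity))
  have hint2 : IntervalIntegrable (fun t => p t * (t - x) ^ (m + 1)) volume x b :=
    hpxb.mul_continuousOn (Continuous.continuousOn (by continuity))
  rw [hsplit, hleft, hright, ← mul_add,
    intervalIntegral.integral_add_adjacent_intervals hint1 hint2]
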